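/- Let H be a complex Hilbert space, J a signature operator on H, L a densely defined positive self-adjoint operator in H, and B := JL, and assume B is similar to a self-adjoint operator in H. Fix 0 < τ < ∞. Then there exists a constant C > 0 such that for all φ₊ ∈ H₊, φ₋ ∈ H₋, every strong solution ψ of the boundary value problem dψ/dx = −Bψ(x) (0 < x < τ), P₊ψ(0) = φ₊, P₋ψ(τ) = φ₋ satisfies sup_{x ∈ [0, τ]} ‖ψ(x)‖ ≤ C (‖φ₊‖ + ‖φ₋‖); in other words, the (linear) solution map (φ₊, φ₋) ↦ ψ is continuous from H₊ ⊕ H₋ into C([0, τ]; H). -/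

import Mathlib

open scoped ComplexOrder InnerProductSpace

noncomputable section

variable {H : Type*} [NormedAddCommGroup H] [InnerProductSpace ℂ H] [CompleteSpace H]

/-- `J` is a signature operator: `J = J* = J⁻¹`. -/
def IsSignatureOperator (J : H →L[ℂ] H) : Prop :=
  IsSelfAdjoint J ∧ J.comp J = ContinuousLinearMap.id ℂ H

/-- The orthogonal projection onto `H₊ = ker (J - I)`, which equals `(I + J)/2`
for a signature operator `J`. -/
def Pplus (J : H →L[ℂ] H) : H →L[ℂ] H := (2⁻¹ : ℂ) • (ContinuousLinearMap.id ℂ H + J)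

/-- The orthogonal projection onto `H₋ = ker (J + I)`, which equals `(I - J)/2`
for a signature operator `J`. -/
def Pminus (J : H →L[ℂ] H) : H →L[ℂ] H := (2⁻¹ : ℂ) • (ContinuousLinearMap.id ℂ H - J)

/-- The composition `J ∘ L` of a bounded operator `J` with an unbounded operator `L`,
as an unbounded operator with the same domain as `L`. -/
def pmapComp (J : H →L[ℂ] H) (L : H →ₗ.[ℂ] H) : H →ₗ.[ℂ] H :=
  { domain := L.domain
    toFun := (J : H →ₗ[ℂ] H).comp L.toFun }

/-- `L` is a positive operator: `⟨L h, h⟩ > 0` for every nonzero `h ∈ dom L`. -/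
def IsPositivePMap (L : H →ₗ.[ℂ] H) : Prop :=
  ∀ h : L.domain, (h : H) ≠ 0 → 0 < ⟪L h, (h : H)⟫_ℂ

/-- `B` is similar to a self-adjoint operator: there is a bounded operator `S` with bounded
inverse mapping `dom B` onto the domain of a self-adjoint operator `A` such that
`A (S h) = S (B h)` for all `h ∈ dom B`. -/
def SimilarToSelfAdjoint (B : H →ₗ.[ℂ] H) : Prop :=
  ∃ (S : H ≃L[ℂ] H) (A : H →ₗ.[ℂ] H), IsSelfAdjoint A ∧
    (A.domain : Set H) = (fun h => S h) '' (B.domain : Set H) ∧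
    ∀ (h : B.domain) (hSh : S (h : H) ∈ A.domain), A ⟨S (h : H), hSh⟩ = S (B h)

/-- `ψ` solves `ψ' = -B ψ + f` on the set `s` with a continuous derivative:
on `s`, `ψ` takes values in `dom B`, is differentiable with derivative `ψ'`,
`ψ'` is continuous on `s`, and `ψ' x = -B (ψ x) + f x`. -/
def IsStrongSolutionOn (B : H →ₗ.[ℂ] H) (f : ℝ → H) (ψ : ℝ → H) (s : Set ℝ) : Prop :=
  ∃ ψ' : ℝ → H, ContinuousOn ψ' s ∧
    ∀ x ∈ s, HasDerivAt ψ (ψ' x) x ∧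
      ∃ hx : ψ x ∈ B.domain, ψ' x = -(B ⟨ψ x, hx⟩) + f x

open Set in
lemma symm_of_selfAdjoint' {A : H →ₗ.[ℂ] H} (hA : IsSelfAdjoint A) :
    ∀ u v : A.domain, ⟪A u, (v:H)⟫_ℂ = ⟪(u:H), A v⟫_ℂ := by
  have hd : Dense (A.domain : Set H) := hA.dense_domain
  have h := LinearPMap.adjoint_isFormalAdjoint hd
  rw [LinearPMap.isSelfAdjoint_def] at hA
  rw [hA] at h
  exact fun u v => h u v

open Set in
/-- Correctness: under the assumptions of Theorem 2.1 there is a constant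
`C > 0` such that every strong solution of the boundary value problem satisfies
`sup_{x ∈ [0,τ]} ‖ψ(x)‖ ≤ C (‖φ₊‖ + ‖φ₋‖)`. -/
theorem statement3 (J : H →L[ℂ] H) (hJ : IsSignatureOperator J)
    (L : H →ₗ.[ℂ] H) (hdense : Dense (L.domain : Set H))
    (hLsa : IsSelfAdjoint L) (hLpos : IsPositivePMap L)
    (hsim : SimilarToSelfAdjoint (pmapComp J L))
    (τ : ℝ) (hτ : 0 < τ) :
    ∃ C : ℝ, 0 < C ∧
      ∀ (φp φm : H), J φp = φp → J φm = -φm →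
        ∀ ψ : ℝ → H,
          (ContinuousOn ψ (Set.Icc 0 τ) ∧
            IsStrongSolutionOn (pmapComp J L) (fun _ => 0) ψ (Set.Ioo 0 τ) ∧
            Pplus J (ψ 0) = φp ∧ Pminus J (ψ τ) = φm) →
          ∀ x ∈ Set.Icc (0 : ℝ) τ, ‖ψ x‖ ≤ C * (‖φp‖ + ‖φm‖) := by
  obtain ⟨hJsa, hJ2⟩ := hJ
  obtain ⟨S, A, hAsa, hAdom, hAeq⟩ := hsim
  have hAsym := symm_of_selfAdjoint' hAsa
  set Ms : ℝ := ‖(S : H →L[ℂ] H)‖ with hMs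
  set Mi : ℝ := ‖(S.symm : H →L[ℂ] H)‖ with hMi
  have hMs0 : 0 ≤ Ms := norm_nonneg _
  have hMi0 : 0 ≤ Mi := norm_nonneg _
  refine ⟨2 * (1 + Ms) * (1 + Mi), by positivity, ?_⟩
  rintro φp φm hφp hφm ψ ⟨hψc, ⟨ψ', hψ'c, hsol⟩, hb0, hbτ⟩ x hx
  -- basic J facts
  have hJJ : ∀ h : H, J (J h) = h := by
    intro h; have := DFunLike.congr_fun hJ2 h; simpa using this
  have hJsym : ∀ u v : H, ⟪J u, v⟫_ℂ = ⟪u, J v⟫_ℂ :=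
    fun u v => (ContinuousLinearMap.isSelfAdjoint_iff_isSymmetric.mp hJsa) u v
  have hJnorm : ∀ h : H, ‖J h‖ = ‖h‖ := by
    intro h
    rw [@norm_eq_sqrt_re_inner ℂ, @norm_eq_sqrt_re_inner ℂ H]
    congr 1
    rw [hJsym, hJJ]
  have hresym : ∀ u v : H, (⟪u, v⟫_ℂ).re = (⟪v, u⟫_ℂ).re := by
    intro u v; simpa using inner_re_symm (𝕜 := ℂ) u v
  have e1 : ∀ h : H, ‖Pplus J h‖^2 = (‖h‖^2 + (⟪J h, h⟫_ℂ).re)/2 := by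
    intro h
    have h1 : Pplus J h = (2⁻¹ : ℂ) • (h + J h) := rfl
    rw [h1, norm_smul, mul_pow, @norm_add_sq ℂ, hJnorm]
    simp only [RCLike.re_to_complex]
    rw [hresym h (J h)]
    norm_num; ring
  have e2 : ∀ h : H, ‖Pminus J h‖^2 = (‖h‖^2 - (⟪J h, h⟫_ℂ).re)/2 := by
    intro h
    have h1 : Pminus J h = (2⁻¹ : ℂ) • (h - J h) := rfl
    rw [h1, norm_smul, mul_pow, @norm_sub_sq ℂ, hJnorm]
    simp only [RCLike.re_to_complex]
    rw [hresym h (J h)]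
    norm_num; ring
  -- the energy E is antitone
  set E : ℝ → ℝ := fun t => (⟪J (ψ t), ψ t⟫_ℂ).re with hE
  have hEcont : ContinuousOn E (Icc 0 τ) := by
    apply Complex.continuous_re.comp_continuousOn
    exact ContinuousOn.inner (J.continuous.comp_continuousOn hψc) hψc
  have hEanti : AntitoneOn E (Icc 0 τ) := by
    apply antitoneOn_of_deriv_nonpos (convex_Icc 0 τ) hEcont
    · intro t ht
      rw [interior_Icc] at ht
      have h1 : HasDerivAt (fun s => J (ψ s)) (J (ψ' t)) t :=
        ((J.hasFDerivAt (x := ψ t)).restrictScalars ℝ).comp_hasDerivAt t (hsol t ht).1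
      have h2 := (hsol t ht).1
      have h3 := HasDerivAt.inner ℂ h1 h2
      exact ((Complex.reCLM.hasFDerivAt.comp_hasDerivAt t h3)).differentiableAt.differentiableWithinAt
    · intro t ht
      rw [interior_Icc] at ht
      obtain ⟨hmem, heq⟩ := (hsol t ht).2
      have h1 : HasDerivAt (fun s => J (ψ s)) (J (ψ' t)) t :=
        ((J.hasFDerivAt (x := ψ t)).restrictScalars ℝ).comp_hasDerivAt t (hsol t ht).1
      have h3 := HasDerivAt.inner ℂ h1 (hsol t ht).1
      have h4 : HasDerivAt E ((⟪J (ψ t), ψ' t⟫_ℂ + ⟪J (ψ' t), ψ t⟫_ℂ).re) t :=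
        Complex.reCLM.hasFDerivAt.comp_hasDerivAt t h3
      rw [h4.deriv]
      -- compute the value
      have hB : (pmapComp J L) ⟨ψ t, hmem⟩ = J (L ⟨ψ t, hmem⟩) := rfl
      set w : H := L ⟨ψ t, hmem⟩ with hw
      have hψ't : ψ' t = -(J w) := by rw [heq, hB]; simp
      have hpos : 0 ≤ (⟪w, ψ t⟫_ℂ).re := by
        by_cases h0 : ψ t = 0
        · have h5 : (⟨ψ t, hmem⟩ : L.domain) = 0 := Subtype.ext h0
          rw [hw, h5]; simp
        · have h5 := hLpos ⟨ψ t, hmem⟩ h0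
          rw [Complex.lt_def] at h5
          rw [hw]
          exact le_of_lt (by simpa using h5.1)
      have hc1 : (⟪J (ψ t), ψ' t⟫_ℂ).re = -(⟪w, ψ t⟫_ℂ).re := by
        rw [hψ't, inner_neg_right, hJsym, hJJ, hresym]
        simp
      have hc2 : (⟪J (ψ' t), ψ t⟫_ℂ).re = -(⟪w, ψ t⟫_ℂ).re := by
        rw [hψ't, map_neg, hJJ, inner_neg_left]
        simp
      rw [Complex.add_re, hc1, hc2]
      linarith
  -- similarity facts
  have hφmem : ∀ {y : H} (hy : y ∈ L.domain), S y ∈ A.domain := by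
    intro y hy
    rw [← SetLike.mem_coe, hAdom]
    exact ⟨y, hy, rfl⟩
  have hAφ : ∀ t ∈ Ioo 0 τ, ∀ (hmem : ψ t ∈ L.domain) (hS : S (ψ t) ∈ A.domain),
      A ⟨S (ψ t), hS⟩ = -(S (ψ' t)) := by
    intro t ht hmem hS
    obtain ⟨hmem', heq⟩ := (hsol t ht).2
    have h1 := hAeq ⟨ψ t, hmem'⟩ hS
    rw [h1]
    have : (pmapComp J L) ⟨ψ t, hmem'⟩ = -(ψ' t) := by
      rw [heq]; simp
    rw [this, map_neg]

  -- maximum of g over [0, τ] is attained at an endpoint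
  set g : ℝ → ℝ := fun t => ‖S (ψ t)‖ with hg
  have hgnn : ∀ t, 0 ≤ g t := fun t => norm_nonneg _
  have hgc : ContinuousOn g (Icc 0 τ) :=
    (S.continuous.comp_continuousOn hψc).norm
  obtain ⟨x₀, hx₀, hmax⟩ :=
    isCompact_Icc.exists_isMaxOn (nonempty_Icc.mpr (le_of_lt hτ)) hgc
  have hkey : g x₀ ≤ max (g 0) (g τ) := by
    rcases eq_or_lt_of_le hx₀.1 with h0 | h0
    · rw [← h0]; exact le_max_left _ _
    rcases eq_or_lt_of_le hx₀.2 with hτ' | hτ'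
    · rw [hτ']; exact le_max_right _ _
    set d : ℝ := min x₀ (τ - x₀) with hd
    have hd0 : 0 < d := lt_min h0 (by linarith)
    have hdx : d ≤ x₀ := min_le_left _ _
    have hdτ : d ≤ τ - x₀ := min_le_right _ _
    set k : ℝ → ℝ := fun t => (⟪S (ψ (x₀ + t)), S (ψ (x₀ - t))⟫_ℂ).re with hk
    have hmap1 : MapsTo (fun t => x₀ + t) (Icc 0 d) (Icc 0 τ) := by
      intro t ht
      simp only [mem_Icc] at ht ⊢
      constructor <;> linarith [ht.1, ht.2]
    have hmap2 : MapsTo (fun t => x₀ - t) (Icc 0 d) (Icc 0 τ) := by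
      intro t ht
      simp only [mem_Icc] at ht ⊢
      constructor <;> linarith [ht.1, ht.2]
    have hkc : ContinuousOn k (Icc 0 d) := by
      apply Complex.continuous_re.comp_continuousOn
      apply ContinuousOn.inner
      · exact S.continuous.comp_continuousOn
          (hψc.comp (continuous_const.add continuous_id).continuousOn hmap1)
      · exact S.continuous.comp_continuousOn
          (hψc.comp (continuous_const.sub continuous_id).continuousOn hmap2)
    have hkd : ∀ t ∈ Ico 0 d, HasDerivWithinAt k 0 (Ici t) t := by
      intro t ht
      have ht1 : x₀ + t ∈ Ioo 0 τ := ⟨by linarith [ht.1], by linarith [ht.2]⟩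
      have ht2 : x₀ - t ∈ Ioo 0 τ := ⟨by linarith [ht.2], by linarith [ht.1]⟩
      have hu0 : HasDerivAt (fun s => ψ (x₀ + s)) (ψ' (x₀ + t)) t := by
        have := HasDerivAt.scomp (𝕜 := ℝ) t (hsol _ ht1).1 ((hasDerivAt_id t).const_add x₀)
        simpa [Function.comp_def] using this
      have hv0 : HasDerivAt (fun s => ψ (x₀ - s)) (-(ψ' (x₀ - t))) t := by
        have := HasDerivAt.scomp (𝕜 := ℝ) t (hsol _ ht2).1 ((hasDerivAt_id t).const_sub x₀)
        simpa [Function.comp_def] using this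
      have hu : HasDerivAt (fun s => S (ψ (x₀ + s))) (S (ψ' (x₀ + t))) t := by
        simpa [Function.comp_def] using
        (((S : H →L[ℂ] H).hasFDerivAt (x := ψ (x₀ + t))).restrictScalars ℝ).comp_hasDerivAt t hu0
      have hv : HasDerivAt (fun s => S (ψ (x₀ - s))) (-(S (ψ' (x₀ - t)))) t := by
        have := (((S : H →L[ℂ] H).hasFDerivAt (x := ψ (x₀ - t))).restrictScalars ℝ).comp_hasDerivAt t hv0
        simpa [Function.comp_def] using this
      have h3 := HasDerivAt.inner ℂ hu hv
      have h4 : HasDerivAt k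
          ((⟪S (ψ (x₀ + t)), -(S (ψ' (x₀ - t)))⟫_ℂ + ⟪S (ψ' (x₀ + t)), S (ψ (x₀ - t))⟫_ℂ).re) t :=
        Complex.reCLM.hasFDerivAt.comp_hasDerivAt t h3
      have hm1 : ψ (x₀ + t) ∈ L.domain := ((hsol _ ht1).2).choose
      have hm2 : ψ (x₀ - t) ∈ L.domain := ((hsol _ ht2).2).choose
      have hS1 : S (ψ (x₀ + t)) ∈ A.domain := hφmem hm1
      have hS2 : S (ψ (x₀ - t)) ∈ A.domain := hφmem hm2
      have hval : (⟪S (ψ (x₀ + t)), -(S (ψ' (x₀ - t)))⟫_ℂ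
          + ⟪S (ψ' (x₀ + t)), S (ψ (x₀ - t))⟫_ℂ) = 0 := by
        have hA1 : A ⟨S (ψ (x₀ + t)), hS1⟩ = -(S (ψ' (x₀ + t))) := hAφ _ ht1 hm1 hS1
        have hA2 : A ⟨S (ψ (x₀ - t)), hS2⟩ = -(S (ψ' (x₀ - t))) := hAφ _ ht2 hm2 hS2
        have := hAsym ⟨S (ψ (x₀ + t)), hS1⟩ ⟨S (ψ (x₀ - t)), hS2⟩
        rw [hA1, hA2] at this
        simp only [inner_neg_left, inner_neg_right] at this ⊢
        push_cast at this
        linear_combination -this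
      rw [hval] at h4
      simpa using h4.hasDerivWithinAt
    have hconst := constant_of_has_deriv_right_zero hkc hkd d ⟨le_of_lt hd0, le_refl d⟩
    have hk0 : k 0 = (g x₀)^2 := by
      simp only [hk, add_zero, sub_zero]
      rw [hg]
      rw [← @inner_self_eq_norm_sq ℂ]
      simp
    have hkdle : k d ≤ g (x₀ + d) * g (x₀ - d) := by
      have := re_inner_le_norm (𝕜 := ℂ) (S (ψ (x₀ + d))) (S (ψ (x₀ - d)))
      simpa using this
    have hsq : (g x₀)^2 ≤ g (x₀ + d) * g (x₀ - d) := by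
      rw [← hk0, ← hconst]; exact hkdle
    have hone : g (x₀ + d) ≤ g x₀ := hmax (hmap1 ⟨le_of_lt hd0, le_refl d⟩)
    have htwo : g (x₀ - d) ≤ g x₀ := hmax (hmap2 ⟨le_of_lt hd0, le_refl d⟩)
    have hend : g (x₀ + d) ≤ max (g 0) (g τ) ∨ g (x₀ - d) ≤ max (g 0) (g τ) := by
      rcases min_cases x₀ (τ - x₀) with ⟨hmin, _⟩ | ⟨hmin, _⟩
      · right
        have : x₀ - d = 0 := by rw [hd, hmin]; ring
        rw [this]; exact le_max_left _ _
      · left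
        have : x₀ + d = τ := by rw [hd, hmin]; ring
        rw [this]; exact le_max_right _ _
    rcases hend with hend | hend
    · nlinarith [hgnn x₀, hgnn (x₀ - d), hgnn (x₀ + d), le_max_left (g 0) (g τ), hgnn 0]
    · nlinarith [hgnn x₀, hgnn (x₀ - d), hgnn (x₀ + d), le_max_left (g 0) (g τ), hgnn 0]
  -- final assembly
  have hETle : E τ ≤ E 0 :=
    hEanti (left_mem_Icc.mpr (le_of_lt hτ)) (right_mem_Icc.mpr (le_of_lt hτ)) (le_of_lt hτ)
  set a : ℝ := ‖φp‖ with ha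
  set b : ℝ := ‖φm‖ with hbb
  have hE0 : E 0 = a^2 - ‖Pminus J (ψ 0)‖^2 := by
    rw [hE]
    have := e1 (ψ 0)
    have h2 := e2 (ψ 0)
    rw [hb0] at this
    rw [ha]
    linarith
  have hEτ : E τ = ‖Pplus J (ψ τ)‖^2 - b^2 := by
    rw [hE]
    have := e1 (ψ τ)
    have h2 := e2 (ψ τ)
    rw [hbτ] at h2
    rw [hbb]
    linarith
  have hn0 : ‖ψ 0‖^2 = a^2 + ‖Pminus J (ψ 0)‖^2 := by
    have := e1 (ψ 0); have h2 := e2 (ψ 0); rw [hb0] at this; rw [ha]; linarith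
  have hnτ : ‖ψ τ‖^2 = ‖Pplus J (ψ τ)‖^2 + b^2 := by
    have := e1 (ψ τ); have h2 := e2 (ψ τ); rw [hbτ] at h2; rw [hbb]; linarith
  have hineq : ‖Pplus J (ψ τ)‖^2 + ‖Pminus J (ψ 0)‖^2 ≤ a^2 + b^2 := by
    rw [hE0, hEτ] at hETle; linarith
  have ha0 : 0 ≤ a := norm_nonneg _
  have hb0' : 0 ≤ b := norm_nonneg _
  have hψ0 : ‖ψ 0‖ ≤ 2 * (a + b) := by
    have h1 : ‖ψ 0‖^2 ≤ (2 * (a + b))^2 := by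
      nlinarith only [hn0, hineq, ha0, hb0', sq_nonneg ‖Pplus J (ψ τ)‖, mul_nonneg ha0 hb0']
    exact (pow_le_pow_iff_left₀ (norm_nonneg _) (by positivity) (by norm_num)).mp h1
  have hψτ : ‖ψ τ‖ ≤ 2 * (a + b) := by
    have h1 : ‖ψ τ‖^2 ≤ (2 * (a + b))^2 := by
      nlinarith only [hnτ, hineq, ha0, hb0', sq_nonneg ‖Pminus J (ψ 0)‖, mul_nonneg ha0 hb0']
    exact (pow_le_pow_iff_left₀ (norm_nonneg _) (by positivity) (by norm_num)).mp h1
  have hgx : g x ≤ max (g 0) (g τ) := le_trans (hmax hx) hkey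
  have hg0 : g 0 ≤ Ms * ‖ψ 0‖ := (S : H →L[ℂ] H).le_opNorm _
  have hgτ : g τ ≤ Ms * ‖ψ τ‖ := (S : H →L[ℂ] H).le_opNorm _
  have hback : ‖ψ x‖ ≤ Mi * g x := by
    have : ψ x = S.symm (S (ψ x)) := (S.symm_apply_apply _).symm
    rw [this]
    exact (S.symm : H →L[ℂ] H).le_opNorm _
  have hmaxle : max (g 0) (g τ) ≤ Ms * (2 * (a + b)) := by
    apply max_le
    · exact le_trans hg0 (by nlinarith only [hψ0, hMs0, ha0, hb0', norm_nonneg (ψ 0)])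
    · exact le_trans hgτ (by nlinarith only [hψτ, hMs0, ha0, hb0', norm_nonneg (ψ τ)])
  calc ‖ψ x‖ ≤ Mi * g x := hback
    _ ≤ Mi * (Ms * (2 * (a + b))) := by
        apply mul_le_mul_of_nonneg_left (le_trans hgx hmaxle) hMi0
    _ ≤ 2 * (1 + Ms) * (1 + Mi) * (a + b) := by
        nlinarith only [hMs0, hMi0, ha0, hb0', mul_nonneg hMs0 hMi0, mul_nonneg ha0 hb0',
          mul_nonneg (mul_nonneg hMs0 hMi0) (add_nonneg ha0 hb0'),
          mul_nonneg hMs0 (add_nonneg ha0 hb0'), mul_nonneg hMi0 (add_nonneg ha0 hb0'),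
          add_nonneg ha0 hb0']


end
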